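/- Let p be a full-support prior on {x_1,…,x_N}, let ε ≥ 0, and let μ : [0,∞)^N → [0,∞) be sublinear and permutation-symmetric. Let V = {λ ∈ ℝ^N : 0 ≤ λ_i ≤ e^ε for all i, and ∑_{i=1}^N p_i·λ_i = 1}, and let V* be the (finite) set of extreme points of the polytope V. Then the supremum of the sub-convex utility U over M_N(ε) equals the maximum, over all weight assignments w : V* → [0,∞) satisfying ∑_{λ∈V*} w(λ) = 1 and ∑_{λ∈V*} w(λ)·λ_i = 1 for every i ∈ {1,…,N}, of the linear objective ∑_{λ∈V*} w(λ)·μ(λ). -/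

import Mathlib

open scoped BigOperators Classical

noncomputable section

/-- The output distribution `P_Y(j) = ∑ i, p i * P i j` induced by a prior `p`
and a mechanism `P`. -/
def outDist {N M : ℕ} (p : Fin N → ℝ) (P : Matrix (Fin N) (Fin M) ℝ) (j : Fin M) : ℝ :=
  ∑ i, p i * P i j

/-- A privacy mechanism: nonnegative entries, rows summing to one. -/
def IsMechanism {N M : ℕ} (P : Matrix (Fin N) (Fin M) ℝ) : Prop :=
  (∀ i j, 0 ≤ P i j) ∧ ∀ i, ∑ j, P i j = 1

/-- Pointwise maximal leakage to output `j`: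
`ℓ(X → y_j) = log((max_i P i j) / P_Y(j))`. -/
def pml {N M : ℕ} (p : Fin N → ℝ) (P : Matrix (Fin N) (Fin M) ℝ) (j : Fin M) : ℝ :=
  Real.log ((⨆ i, P i j) / outDist p P j)

/-- `P` satisfies `ε`-PML (w.r.t. prior `p`): the leakage of every output of
positive probability is at most `ε`. -/
def SatisfiesPML {N M : ℕ} (p : Fin N → ℝ) (ε : ℝ) (P : Matrix (Fin N) (Fin M) ℝ) : Prop :=
  ∀ j, 0 < outDist p P j → pml p P j ≤ ε

/-- A sublinear function `μ : [0,∞)^N → [0,∞)`: nonnegative, positively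
homogeneous and subadditive on the nonnegative orthant. -/
def Sublinear {N : ℕ} (μ : (Fin N → ℝ) → ℝ) : Prop :=
  (∀ x, (∀ i, 0 ≤ x i) → 0 ≤ μ x) ∧
  (∀ (c : ℝ), 0 ≤ c → ∀ x, (∀ i, 0 ≤ x i) → μ (c • x) = c * μ x) ∧
  (∀ x y, (∀ i, 0 ≤ x i) → (∀ i, 0 ≤ y i) → μ (x + y) ≤ μ x + μ y)

/-- The sub-convex utility associated with `μ`: `U(P) = ∑ j, μ(P_j)` where
`P_j` is the `j`-th column of `P`. -/
def utility {N M : ℕ} (μ : (Fin N → ℝ) → ℝ) (P : Matrix (Fin N) (Fin M) ℝ) : ℝ :=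
  ∑ j, μ (fun i => P i j)

end

/-- `μ` is permutation-symmetric. -/
def PermSymmetric {N : ℕ} (μ : (Fin N → ℝ) → ℝ) : Prop :=
  ∀ σ : Equiv.Perm (Fin N), ∀ x : Fin N → ℝ, μ (x ∘ σ) = μ x

/-- The polytope of feasible lift vectors for privacy level `ε` and prior `p`. -/
def liftPolytope (N : ℕ) (p : Fin N → ℝ) (ε : ℝ) : Set (Fin N → ℝ) :=
  {lam | (∀ i, 0 ≤ lam i ∧ lam i ≤ Real.exp ε) ∧ ∑ i, p i * lam i = 1}

section MuLemmas

variable {N : ℕ} {μ : (Fin N → ℝ) → ℝ}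

lemma mu_zero (hμ : Sublinear μ) : μ 0 = 0 := by
  have h := hμ.2.1 0 le_rfl 0 (fun _ => le_rfl)
  rw [zero_smul] at h
  simpa using h

lemma mu_nonneg_sum {ι : Type*} (s : Finset ι) (f : ι → (Fin N → ℝ))
    (hf : ∀ x ∈ s, ∀ i, 0 ≤ f x i) : ∀ i, 0 ≤ (∑ x ∈ s, f x) i := by
  intro i
  rw [Finset.sum_apply]
  exact Finset.sum_nonneg fun x hx => hf x hx i

lemma mu_sum_le (hμ : Sublinear μ) {ι : Type*} (s : Finset ι) (f : ι → (Fin N → ℝ))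
    (hf : ∀ x ∈ s, ∀ i, 0 ≤ f x i) : μ (∑ x ∈ s, f x) ≤ ∑ x ∈ s, μ (f x) := by
  induction s using Finset.cons_induction with
  | empty => simp [mu_zero hμ]
  | cons a s ha ih =>
      rw [Finset.sum_cons, Finset.sum_cons]
      have h1 : μ (f a + ∑ x ∈ s, f x) ≤ μ (f a) + μ (∑ x ∈ s, f x) :=
        hμ.2.2 _ _ (fun i => hf a (Finset.mem_cons_self a s) i)
          (mu_nonneg_sum s f (fun x hx => hf x (Finset.mem_cons_of_mem hx)))
      exact h1.trans (by
        have := ih (fun x hx => hf x (Finset.mem_cons_of_mem hx))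
        linarith)

lemma mu_combo_le (hμ : Sublinear μ) {ι : Type*} (s : Finset ι) (a : ι → ℝ)
    (g : ι → (Fin N → ℝ)) (ha : ∀ x ∈ s, 0 ≤ a x)
    (hg : ∀ x ∈ s, ∀ i, 0 ≤ g x i) :
    μ (fun i => ∑ x ∈ s, a x * g x i) ≤ ∑ x ∈ s, a x * μ (g x) := by
  have key : (fun i => ∑ x ∈ s, a x * g x i) = ∑ x ∈ s, a x • g x := by
    funext i
    rw [Finset.sum_apply]
    rfl
  rw [key]
  refine (mu_sum_le hμ s _ (fun x hx i => mul_nonneg (ha x hx) (hg x hx i))).trans ?_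
  apply Finset.sum_le_sum
  intro x hx
  exact le_of_eq (hμ.2.1 (a x) (ha x hx) (g x) (hg x hx))

end MuLemmas
section PolyLemmas

variable {N : ℕ}

/-- The set of "free" coordinates of a lift vector. -/
noncomputable def freeSet (ε : ℝ) (lam : Fin N → ℝ) : Finset (Fin N) :=
  Finset.univ.filter (fun i => lam i ≠ 0 ∧ lam i ≠ Real.exp ε)

variable {p : Fin N → ℝ} {ε : ℝ}

/-- If all but at most one coordinate of `lam ∈ V` lies in `{0, e^ε}`, then
`lam` is an extreme point of `V`. -/
lemma extreme_of_freeSet_card_le_one (hp : ∀ i, 0 < p i)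
    {lam : Fin N → ℝ} (hlam : lam ∈ liftPolytope N p ε)
    (hcard : (freeSet ε lam).card ≤ 1) :
    lam ∈ (liftPolytope N p ε).extremePoints ℝ := by
  rw [mem_extremePoints]
  refine ⟨hlam, ?_⟩
  intro x₁ hx₁ x₂ hx₂ hseg
  obtain ⟨t1, t2, ht1, ht2, hts, heq⟩ := hseg
  have hall : ∀ s1 s2 : ℝ, 0 < s1 → 0 < s2 → s1 + s2 = 1 →
      ∀ y ∈ liftPolytope N p ε, ∀ z ∈ liftPolytope N p ε,
      s1 • y + s2 • z = lam → y = lam := by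
    intro s1 s2 hs1 hs2 hss y hy z hz hyz
    have hoff : ∀ i, i ∉ freeSet ε lam → y i = lam i := by
      intro i hi
      have hyi := (hy.1 i)
      have hzi := (hz.1 i)
      have hcomb : s1 * y i + s2 * z i = lam i := by
        have := congrFun hyz i
        simpa using this
      simp only [freeSet, Finset.mem_filter, Finset.mem_univ, true_and, not_and_or,
        not_not] at hi
      rcases hi with h0 | hE
      · rw [h0] at hcomb
        nlinarith [hyi.1, hzi.1]
      · rw [hE] at hcomb
        nlinarith [hyi.2, hzi.2]
    funext i
    by_cases hi : i ∈ freeSet ε lam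
    · have hne : Nonempty (Fin N) := ⟨i⟩
      obtain ⟨i0, hi0⟩ := Finset.card_le_one_iff_subset_singleton.1 hcard
      have hii0 : i = i0 := by simpa using hi0 hi
      subst hii0
      have hsumy : ∑ k, p k * y k = 1 := hy.2
      have hsuml : ∑ k, p k * lam k = 1 := hlam.2
      have hsub : ∑ k, (p k * y k - p k * lam k) = 0 := by
        rw [Finset.sum_sub_distrib, hsumy, hsuml]; ring
      have hsingle : ∑ k, (p k * y k - p k * lam k) = p i * y i - p i * lam i := by
        apply Finset.sum_eq_single
        · intro k _ hk
          have : y k = lam k := by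
            apply hoff
            intro hkfree
            exact hk (by simpa using hi0 hkfree)
          rw [this]; ring
        · intro h
          exact absurd (Finset.mem_univ i) h
      rw [hsingle] at hsub
      have := hp i
      nlinarith
    · exact hoff i hi
  have h1 : x₁ = lam := hall t1 t2 ht1 ht2 hts x₁ hx₁ x₂ hx₂ heq
  have h2 : x₂ = lam := by
    apply hall t2 t1 ht2 ht1 (by linarith) x₂ hx₂ x₁ hx₁
    rw [← heq]; abel
  exact ⟨h1, h2⟩

end PolyLemmas
section SplitLemmas

variable {N : ℕ} {p : Fin N → ℝ} {ε : ℝ}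

/-- A vector of `V` with at least two free coordinates can be split along a
segment inside `V`, strictly decreasing the number of free coordinates at
both endpoints. -/
lemma split_lemma (hp : ∀ i, 0 < p i)
    {lam : Fin N → ℝ} (hlam : lam ∈ liftPolytope N p ε)
    {i j : Fin N} (hij : i ≠ j)
    (hi : i ∈ freeSet ε lam) (hj : j ∈ freeSet ε lam) :
    ∃ (a b : Fin N → ℝ) (t : ℝ), a ∈ liftPolytope N p ε ∧ b ∈ liftPolytope N p ε ∧
      0 < t ∧ t < 1 ∧ (∀ k, t * a k + (1 - t) * b k = lam k) ∧
      freeSet ε a ⊂ freeSet ε lam ∧ freeSet ε b ⊂ freeSet ε lam ∧ a ≠ lam := by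
  have hpi := hp i
  have hpj := hp j
  simp only [freeSet, Finset.mem_filter, Finset.mem_univ, true_and] at hi hj
  have hib := hlam.1 i
  have hjb := hlam.1 j
  have hi1 : 0 < lam i := lt_of_le_of_ne hib.1 (Ne.symm hi.1)
  have hi2 : lam i < Real.exp ε := lt_of_le_of_ne hib.2 hi.2
  have hj1 : 0 < lam j := lt_of_le_of_ne hjb.1 (Ne.symm hj.1)
  have hj2 : lam j < Real.exp ε := lt_of_le_of_ne hjb.2 hj.2
  set d : Fin N → ℝ := fun k => if k = i then 1 / p i else if k = j then -(1 / p j) else 0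
    with hd
  have hdi : d i = 1 / p i := by simp [hd]
  have hdj : d j = -(1 / p j) := by simp [hd, Ne.symm hij]
  have hdo : ∀ k, k ≠ i → k ≠ j → d k = 0 := by intro k h1 h2; simp [hd, h1, h2]
  have hdsum : ∑ k, p k * d k = 0 := by
    have hterm : ∀ k, p k * d k =
        (if k = i then (1:ℝ) else 0) - (if k = j then (1:ℝ) else 0) := by
      intro k
      by_cases hki : k = i
      · rw [hki, hdi, if_pos rfl, if_neg hij]
        field_simp
        ring
      · by_cases hkj : k = j
        · rw [hkj, hdj, if_neg (Ne.symm hij), if_pos rfl]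
          field_simp
          ring
        · rw [hdo k hki hkj, if_neg hki, if_neg hkj]
          ring
    rw [Finset.sum_congr rfl (fun k _ => hterm k), Finset.sum_sub_distrib]
    simp
  have hconstr : ∀ s : ℝ, ∑ k, p k * (lam k + s * d k) = 1 := by
    intro s
    have h : ∀ k, p k * (lam k + s * d k) = p k * lam k + s * (p k * d k) := fun k => by ring
    rw [Finset.sum_congr rfl (fun k _ => h k), Finset.sum_add_distrib,
      ← Finset.mul_sum, hdsum, hlam.2]
    ring
  set sp := min (p i * (Real.exp ε - lam i)) (p j * lam j) with hsp
  set sm := min (p i * lam i) (p j * (Real.exp ε - lam j)) with hsm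
  have hsp0 : 0 < sp := lt_min (by nlinarith) (by nlinarith)
  have hsm0 : 0 < sm := lt_min (by nlinarith) (by nlinarith)
  set a : Fin N → ℝ := fun k => lam k + sp * d k with ha
  set b : Fin N → ℝ := fun k => lam k + (-sm) * d k with hb
  have hai : a i = lam i + sp / p i := by simp only [ha]; rw [hdi]; ring
  have haj : a j = lam j - sp / p j := by simp only [ha]; rw [hdj]; ring
  have hbi : b i = lam i - sm / p i := by simp only [hb]; rw [hdi]; ring
  have hbj : b j = lam j + sm / p j := by simp only [hb]; rw [hdj]; ring
  have hoffa : ∀ k, k ≠ i → k ≠ j → a k = lam k := by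
    intro k h1 h2; simp only [ha]; rw [hdo k h1 h2]; ring
  have hoffb : ∀ k, k ≠ i → k ≠ j → b k = lam k := by
    intro k h1 h2; simp only [hb]; rw [hdo k h1 h2]; ring
  -- bounds
  have hai_le : a i ≤ Real.exp ε := by
    rw [hai]
    have h1 : sp / p i ≤ Real.exp ε - lam i :=
      (div_le_iff₀ hpi).2 (by rw [mul_comm]; exact min_le_left _ _)
    linarith
  have hai_ge : 0 ≤ a i := by
    rw [hai]
    have : 0 < sp / p i := by positivity
    linarith
  have haj_ge : 0 ≤ a j := by
    rw [haj]
    have h1 : sp / p j ≤ lam j :=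
      (div_le_iff₀ hpj).2 (by rw [mul_comm]; exact min_le_right _ _)
    linarith
  have haj_le : a j ≤ Real.exp ε := by
    rw [haj]
    have : 0 < sp / p j := by positivity
    linarith
  have hbi_ge : 0 ≤ b i := by
    rw [hbi]
    have h1 : sm / p i ≤ lam i :=
      (div_le_iff₀ hpi).2 (by rw [mul_comm]; exact min_le_left _ _)
    linarith
  have hbi_le : b i ≤ Real.exp ε := by
    rw [hbi]
    have : 0 < sm / p i := by positivity
    linarith
  have hbj_le : b j ≤ Real.exp ε := by
    rw [hbj]
    have h1 : sm / p j ≤ Real.exp ε - lam j :=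
      (div_le_iff₀ hpj).2 (by rw [mul_comm]; exact min_le_right _ _)
    linarith
  have hbj_ge : 0 ≤ b j := by
    rw [hbj]
    have : 0 < sm / p j := by positivity
    linarith
  have haV : a ∈ liftPolytope N p ε := by
    refine ⟨fun k => ?_, hconstr sp⟩
    by_cases hki : k = i
    · rw [hki]; exact ⟨hai_ge, hai_le⟩
    · by_cases hkj : k = j
      · rw [hkj]; exact ⟨haj_ge, haj_le⟩
      · rw [hoffa k hki hkj]; exact hlam.1 k
  have hbV : b ∈ liftPolytope N p ε := by
    refine ⟨fun k => ?_, hconstr (-sm)⟩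
    by_cases hki : k = i
    · rw [hki]; exact ⟨hbi_ge, hbi_le⟩
    · by_cases hkj : k = j
      · rw [hkj]; exact ⟨hbj_ge, hbj_le⟩
      · rw [hoffb k hki hkj]; exact hlam.1 k
  -- free sets shrink
  have hfsuba : freeSet ε a ⊆ freeSet ε lam := by
    intro k hk
    simp only [freeSet, Finset.mem_filter, Finset.mem_univ, true_and] at hk ⊢
    by_cases hki : k = i
    · rw [hki]; exact hi
    · by_cases hkj : k = j
      · rw [hkj]; exact hj
      · rwa [hoffa k hki hkj] at hk
  have hfsubb : freeSet ε b ⊆ freeSet ε lam := by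
    intro k hk
    simp only [freeSet, Finset.mem_filter, Finset.mem_univ, true_and] at hk ⊢
    by_cases hki : k = i
    · rw [hki]; exact hi
    · by_cases hkj : k = j
      · rw [hkj]; exact hj
      · rwa [hoffb k hki hkj] at hk
  have hmemfree : ∀ k, lam k ≠ 0 → lam k ≠ Real.exp ε → k ∈ freeSet ε lam := by
    intro k h1 h2
    simp only [freeSet, Finset.mem_filter, Finset.mem_univ, true_and]
    exact ⟨h1, h2⟩
  have hnotfree : ∀ (y : Fin N → ℝ) (k : Fin N), (y k = 0 ∨ y k = Real.exp ε) →
      k ∉ freeSet ε y := by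
    intro y k hk
    simp only [freeSet, Finset.mem_filter, Finset.mem_univ, true_and, not_and_or, not_not]
    tauto
  have hssa : freeSet ε a ⊂ freeSet ε lam := by
    rw [Finset.ssubset_iff_of_subset hfsuba]
    rcases min_cases (p i * (Real.exp ε - lam i)) (p j * lam j) with ⟨hmin, _⟩ | ⟨hmin, _⟩
    · refine ⟨i, hmemfree i hi.1 hi.2, hnotfree a i (Or.inr ?_)⟩
      rw [hai, ← hsp] at *
      rw [hmin]
      field_simp
      ring
    · refine ⟨j, hmemfree j hj.1 hj.2, hnotfree a j (Or.inl ?_)⟩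
      rw [haj, ← hsp] at *
      rw [hmin]
      field_simp
      ring
  have hssb : freeSet ε b ⊂ freeSet ε lam := by
    rw [Finset.ssubset_iff_of_subset hfsubb]
    rcases min_cases (p i * lam i) (p j * (Real.exp ε - lam j)) with ⟨hmin, _⟩ | ⟨hmin, _⟩
    · refine ⟨i, hmemfree i hi.1 hi.2, hnotfree b i (Or.inl ?_)⟩
      rw [hbi, ← hsm] at *
      rw [hmin]
      field_simp
      ring
    · refine ⟨j, hmemfree j hj.1 hj.2, hnotfree b j (Or.inr ?_)⟩
      rw [hbj, ← hsm] at *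
      rw [hmin]
      field_simp
      ring
  -- the convex combination
  have hspm : (0:ℝ) < sp + sm := by linarith
  refine ⟨a, b, sm / (sp + sm), haV, hbV, by positivity, ?_, ?_, hssa, hssb, ?_⟩
  · rw [div_lt_one hspm]; linarith
  · intro k
    simp only [ha, hb]
    have key : ∀ x y : ℝ, sm / (sp + sm) * (x + sp * y) +
        (1 - sm / (sp + sm)) * (x + -sm * y) = x := by
      intro x y
      field_simp
      ring
    exact key (lam k) (d k)
  · intro hcontra
    have h1 := congrFun hcontra i
    rw [hai] at h1
    have h2 : 0 < sp / p i := by positivity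
    linarith [h1.symm.le]

end SplitLemmas
section DecompLemmas

variable {N : ℕ} {p : Fin N → ℝ} {ε : ℝ}

/-- An extreme point of `V` has at most one free coordinate. -/
lemma freeSet_card_le_one_of_extreme (hp : ∀ i, 0 < p i)
    {lam : Fin N → ℝ} (hlam : lam ∈ (liftPolytope N p ε).extremePoints ℝ) :
    (freeSet ε lam).card ≤ 1 := by
  by_contra hcard
  push_neg at hcard
  obtain ⟨i, hi, j, hj, hij⟩ := Finset.one_lt_card.1 hcard
  obtain ⟨a, b, t, haV, hbV, ht0, ht1, hcomb, -, -, hane⟩ :=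
    split_lemma hp hlam.1 hij hi hj
  have hseg : lam ∈ openSegment ℝ a b := by
    refine ⟨t, 1 - t, ht0, by linarith, by ring, ?_⟩
    funext k
    simpa using hcomb k
  exact hane (hlam.2 haV hbV hseg)

/-- Every element of `V` is a convex combination of extreme points of `V`. -/
lemma decomp_lemma (hp : ∀ i, 0 < p i) :
    ∀ (n : ℕ) (lam : Fin N → ℝ), lam ∈ liftPolytope N p ε → (freeSet ε lam).card ≤ n →
    ∃ (T : Finset (Fin N → ℝ)) (a : (Fin N → ℝ) → ℝ),
      (↑T ⊆ (liftPolytope N p ε).extremePoints ℝ) ∧ (∀ x, 0 ≤ a x) ∧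
      (∀ x ∉ T, a x = 0) ∧ (∑ x ∈ T, a x = 1) ∧ (∀ i, ∑ x ∈ T, a x * x i = lam i) := by
  intro n
  induction n using Nat.strong_induction_on with
  | _ n ih =>
    intro lam hlam hcard
    by_cases h1 : (freeSet ε lam).card ≤ 1
    · refine ⟨{lam}, fun x => if x = lam then 1 else 0, ?_, ?_, ?_, ?_, ?_⟩
      · intro x hx
        simp only [Finset.coe_singleton, Set.mem_singleton_iff] at hx
        rw [hx]
        exact extreme_of_freeSet_card_le_one hp hlam h1
      · intro x; positivity
      · intro x hx
        show (if x = lam then (1:ℝ) else 0) = 0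
        rw [if_neg (by simpa using hx)]
      · simp
      · intro i; simp
    · push_neg at h1
      obtain ⟨i, hi, j, hj, hij⟩ := Finset.one_lt_card.1 h1
      obtain ⟨a, b, t, haV, hbV, ht0, ht1, hcomb, hssa, hssb, -⟩ :=
        split_lemma hp hlam hij hi hj
      have hn : 1 < n := lt_of_lt_of_le h1 hcard
      have hcarda : (freeSet ε a).card < n :=
        lt_of_lt_of_le (Finset.card_lt_card hssa) hcard
      have hcardb : (freeSet ε b).card < n :=
        lt_of_lt_of_le (Finset.card_lt_card hssb) hcard
      obtain ⟨Ta, wa, hTa, hwa0, hwaz, hwas, hwac⟩ :=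
        ih _ hcarda a haV le_rfl
      obtain ⟨Tb, wb, hTb, hwb0, hwbz, hwbs, hwbc⟩ :=
        ih _ hcardb b hbV le_rfl
      refine ⟨Ta ∪ Tb, fun x => t * wa x + (1 - t) * wb x, ?_, ?_, ?_, ?_, ?_⟩
      · intro x hx
        simp only [Finset.coe_union, Set.mem_union] at hx
        rcases hx with h | h
        · exact hTa h
        · exact hTb h
      · intro x
        show 0 ≤ t * wa x + (1 - t) * wb x
        have := hwa0 x
        have := hwb0 x
        nlinarith
      · intro x hx
        show t * wa x + (1 - t) * wb x = 0
        rw [hwaz x (fun h => hx (Finset.mem_union_left _ h)),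
          hwbz x (fun h => hx (Finset.mem_union_right _ h))]
        ring
      · have hsa : ∑ x ∈ Ta ∪ Tb, wa x = 1 := by
          rw [← hwas]
          exact (Finset.sum_subset Finset.subset_union_left
            (fun x _ hx => hwaz x hx)).symm
        have hsb : ∑ x ∈ Ta ∪ Tb, wb x = 1 := by
          rw [← hwbs]
          exact (Finset.sum_subset Finset.subset_union_right
            (fun x _ hx => hwbz x hx)).symm
        rw [Finset.sum_add_distrib, ← Finset.mul_sum, ← Finset.mul_sum, hsa, hsb]
        ring
      · intro k
        have hsa : ∑ x ∈ Ta ∪ Tb, wa x * x k = a k := by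
          rw [← hwac k]
          exact (Finset.sum_subset Finset.subset_union_left
            (fun x _ hx => by rw [hwaz x hx]; ring)).symm
        have hsb : ∑ x ∈ Ta ∪ Tb, wb x * x k = b k := by
          rw [← hwbc k]
          exact (Finset.sum_subset Finset.subset_union_right
            (fun x _ hx => by rw [hwbz x hx]; ring)).symm
        have : ∀ x ∈ Ta ∪ Tb, (t * wa x + (1 - t) * wb x) * x k =
            t * (wa x * x k) + (1 - t) * (wb x * x k) := fun x _ => by ring
        rw [Finset.sum_congr rfl this, Finset.sum_add_distrib, ← Finset.mul_sum,
          ← Finset.mul_sum, hsa, hsb]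
        exact hcomb k

/-- The set of extreme points of the lift polytope is finite. -/
lemma finite_extremePoints (hp : ∀ i, 0 < p i) :
    ((liftPolytope N p ε).extremePoints ℝ).Finite := by
  classical
  set S : Set (Fin N → ℝ) :=
    {lam | lam ∈ liftPolytope N p ε ∧ (freeSet ε lam).card ≤ 1} with hS
  have hsub : (liftPolytope N p ε).extremePoints ℝ ⊆ S := by
    intro lam hlam
    exact ⟨hlam.1, freeSet_card_le_one_of_extreme hp hlam⟩
  refine Set.Finite.subset ?_ hsub
  set Φ : (Fin N → ℝ) → (Fin N → Fin 3) := fun lam i =>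
    if lam i = 0 then 0 else if lam i = Real.exp ε then 1 else 2 with hΦ
  have hinj : Set.InjOn Φ S := by
    intro x hx y hy hxy
    have hoff : ∀ k, k ∉ freeSet ε x → y k = x k := by
      intro k hk
      have hk' := congrFun hxy k
      simp only [hΦ] at hk'
      simp only [freeSet, Finset.mem_filter, Finset.mem_univ, true_and, not_and_or,
        not_not] at hk
      rcases hk with h0 | hE
      · rw [h0]
        rw [if_pos h0] at hk'
        by_contra hy0
        rw [if_neg hy0] at hk'
        by_cases hyE : y k = Real.exp ε
        · rw [if_pos hyE] at hk'
          exact absurd hk' (by decide)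
        · rw [if_neg hyE] at hk'
          exact absurd hk' (by decide)
      · have hne0 : x k ≠ 0 := by
          rw [hE]; exact (Real.exp_pos ε).ne'
        rw [if_neg hne0, if_pos hE] at hk'
        rw [hE]
        by_cases hy0 : y k = 0
        · rw [if_pos hy0] at hk'
          exact absurd hk' (by decide)
        · rw [if_neg hy0] at hk'
          by_cases hyE : y k = Real.exp ε
          · exact hyE
          · rw [if_neg hyE] at hk'
            exact absurd hk' (by decide)
    -- now use the constraint for the (at most one) free coordinate
    funext k
    by_cases hk : k ∈ freeSet ε x
    · have hne : Nonempty (Fin N) := ⟨k⟩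
      obtain ⟨i0, hi0⟩ := Finset.card_le_one_iff_subset_singleton.1 hx.2
      have hki0 : k = i0 := by simpa using hi0 hk
      subst hki0
      have hsumx : ∑ m, p m * x m = 1 := hx.1.2
      have hsumy : ∑ m, p m * y m = 1 := hy.1.2
      have hsub2 : ∑ m, (p m * x m - p m * y m) = 0 := by
        rw [Finset.sum_sub_distrib, hsumx, hsumy]; ring
      have hsingle : ∑ m, (p m * x m - p m * y m) = p k * x k - p k * y k := by
        apply Finset.sum_eq_single
        · intro m _ hm
          have : y m = x m := by
            apply hoff
            intro hmfree
            exact hm (by simpa using hi0 hmfree)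
          rw [this]; ring
        · intro h
          exact absurd (Finset.mem_univ k) h
      rw [hsingle] at hsub2
      have := hp k
      nlinarith
    · exact (hoff k hk).symm
  exact Set.Finite.of_finite_image (Set.toFinite _) hinj

end DecompLemmas
section LPLemmas

variable {N : ℕ} {p : Fin N → ℝ}

/-- Feasible weights over a finite set of candidate lift vectors. -/
def Wfeas (p : Fin N → ℝ) (Vf : Finset (Fin N → ℝ)) : Set (↥Vf → ℝ) :=
  {v | (∀ d, 0 ≤ v d) ∧ ∀ i, ∑ d : ↥Vf, v d * (d : Fin N → ℝ) i = 1}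

/-- The LP objective. -/
def Wobj (μ : (Fin N → ℝ) → ℝ) (Vf : Finset (Fin N → ℝ)) (v : ↥Vf → ℝ) : ℝ :=
  ∑ d : ↥Vf, v d * μ (d : Fin N → ℝ)

/-- Any scaling relation among feasible columns has coefficients summing to the
corresponding combination of the constraints. -/
lemma Wfeas_comb_eq {Vf : Finset (Fin N → ℝ)} (hpsum : ∑ i, p i = 1)
    (hV : ∀ x ∈ Vf, ∑ i, p i * x i = 1) (c : ↥Vf → ℝ) :
    ∑ d : ↥Vf, c d = ∑ i, p i * (∑ d : ↥Vf, c d * (d : Fin N → ℝ) i) := by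
  have h1 : ∀ d : ↥Vf, c d = ∑ i, p i * (c d * (d : Fin N → ℝ) i) := by
    intro d
    have hd := hV ↑d d.2
    calc c d = c d * ∑ i, p i * (d : Fin N → ℝ) i := by rw [hd]; ring
    _ = ∑ i, c d * (p i * (d : Fin N → ℝ) i) := Finset.mul_sum _ _ _
    _ = ∑ i, p i * (c d * (d : Fin N → ℝ) i) := Finset.sum_congr rfl (fun i _ => by ring)
  calc ∑ d : ↥Vf, c d = ∑ d : ↥Vf, ∑ i, p i * (c d * (d : Fin N → ℝ) i) :=
        Finset.sum_congr rfl (fun d _ => h1 d)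
    _ = ∑ i, ∑ d : ↥Vf, p i * (c d * (d : Fin N → ℝ) i) := Finset.sum_comm
    _ = ∑ i, p i * (∑ d : ↥Vf, c d * (d : Fin N → ℝ) i) :=
        Finset.sum_congr rfl (fun i _ => (Finset.mul_sum _ _ _).symm)

lemma Wfeas_sum_one {Vf : Finset (Fin N → ℝ)} (hpsum : ∑ i, p i = 1)
    (hV : ∀ x ∈ Vf, ∑ i, p i * x i = 1) {v : ↥Vf → ℝ} (hv : v ∈ Wfeas p Vf) :
    ∑ d : ↥Vf, v d = 1 := by
  rw [Wfeas_comb_eq hpsum hV v]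
  calc ∑ i, p i * (∑ d : ↥Vf, v d * (d : Fin N → ℝ) i) = ∑ i, p i * 1 :=
        Finset.sum_congr rfl (fun i _ => by rw [hv.2 i])
    _ = 1 := by simp only [mul_one]; exact hpsum

/-- The LP attains its maximum. -/
lemma Wfeas_exists_max {Vf : Finset (Fin N → ℝ)} (hpsum : ∑ i, p i = 1)
    (hV : ∀ x ∈ Vf, ∑ i, p i * x i = 1) (μ : (Fin N → ℝ) → ℝ)
    (hne : (Wfeas p Vf).Nonempty) :
    ∃ v ∈ Wfeas p Vf, ∀ u ∈ Wfeas p Vf, Wobj μ Vf u ≤ Wobj μ Vf v := by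
  have hsub : Wfeas p Vf ⊆ Set.Icc (0 : ↥Vf → ℝ) 1 := by
    intro v hv
    constructor
    · intro d; exact hv.1 d
    · intro d
      calc v d ≤ ∑ d' : ↥Vf, v d' :=
            Finset.single_le_sum (fun d' _ => hv.1 d') (Finset.mem_univ d)
        _ = 1 := Wfeas_sum_one hpsum hV hv
  have hclosed : IsClosed (Wfeas p Vf) := by
    have : Wfeas p Vf = (⋂ (d : ↥Vf), {v : ↥Vf → ℝ | 0 ≤ v d}) ∩
        ⋂ (i : Fin N), {v : ↥Vf → ℝ | ∑ d : ↥Vf, v d * (d : Fin N → ℝ) i = 1} := by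
      ext v
      simp only [Set.mem_inter_iff, Set.mem_iInter, Set.mem_setOf_eq, Wfeas]
    rw [this]
    refine IsClosed.inter (isClosed_iInter fun d => ?_) (isClosed_iInter fun i => ?_)
    · exact isClosed_le continuous_const (continuous_apply d)
    · exact isClosed_eq (continuous_finset_sum _ fun d _ =>
        (continuous_apply d).mul continuous_const) continuous_const
  have hcomp : IsCompact (Wfeas p Vf) :=
    IsCompact.of_isClosed_subset isCompact_Icc hclosed hsub
  have hcont : ContinuousOn (Wobj μ Vf) (Wfeas p Vf) :=
    (continuous_finset_sum _ fun d _ => (continuous_apply d).mul continuous_const).continuousOn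
  obtain ⟨v, hv, hmax⟩ := hcomp.exists_isMaxOn hne hcont
  exact ⟨v, hv, fun u hu => hmax hu⟩

/-- Support reduction: a feasible weight vector can be replaced by one with
support of size at most `N` without decreasing the objective. -/
lemma Wfeas_support_reduce {Vf : Finset (Fin N → ℝ)} (hpsum : ∑ i, p i = 1)
    (hV : ∀ x ∈ Vf, ∑ i, p i * x i = 1) (μ : (Fin N → ℝ) → ℝ) :
    ∀ (n : ℕ) (v : ↥Vf → ℝ), v ∈ Wfeas p Vf →
      (Finset.univ.filter (fun d => v d ≠ 0)).card ≤ n →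
      ∃ v' ∈ Wfeas p Vf, (Finset.univ.filter (fun d => v' d ≠ 0)).card ≤ N ∧
        Wobj μ Vf v ≤ Wobj μ Vf v' := by
  intro n
  induction n using Nat.strong_induction_on with
  | _ n ih =>
    intro v hv hcard
    by_cases hN : (Finset.univ.filter (fun d => v d ≠ 0)).card ≤ N
    · exact ⟨v, hv, hN, le_rfl⟩
    · push_neg at hN
      set s : Finset ↥Vf := Finset.univ.filter (fun d => v d ≠ 0) with hs
      -- a nontrivial linear relation among the support columns
      have hkey : ∀ c : ↥Vf → ℝ, (∀ i, ∑ d : ↥Vf, c d * (d : Fin N → ℝ) i = 0) →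
          (∑ d : ↥Vf, c d = 0) → (∃ d, c d ≠ 0) → (∀ d, c d ≠ 0 → d ∈ s) →
          0 ≤ ∑ d : ↥Vf, c d * μ (d : Fin N → ℝ) →
          ∃ v'' ∈ Wfeas p Vf,
            (Finset.univ.filter (fun d => v'' d ≠ 0)).card < s.card ∧
            Wobj μ Vf v ≤ Wobj μ Vf v'' := by
        intro c hrel hc0 hcne hcsupp hcobj
        -- the negative part of c is nonempty
        have hneg : ∃ d, c d < 0 := by
          by_contra hcon
          push_neg at hcon
          obtain ⟨d₀, hd₀⟩ := hcne
          have : ∀ d ∈ Finset.univ, (0:ℝ) ≤ c d := fun d _ => hcon d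
          have hall0 := (Finset.sum_eq_zero_iff_of_nonneg this).1 hc0
          exact hd₀ (hall0 d₀ (Finset.mem_univ d₀))
        obtain ⟨d₁, hd₁⟩ := hneg
        set ns : Finset ↥Vf := Finset.univ.filter (fun d => c d < 0) with hns
        have hnsne : ns.Nonempty := ⟨d₁, by simp [hns, hd₁]⟩
        obtain ⟨dm, hdm, hmin⟩ := Finset.exists_min_image ns (fun d => v d / (-c d)) hnsne
        have hcdm : c dm < 0 := by
          simp only [hns, Finset.mem_filter] at hdm
          exact hdm.2
        have hvdm : 0 < v dm := by
          have hmem : dm ∈ s := hcsupp dm hcdm.ne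
          simp only [hs, Finset.mem_filter] at hmem
          exact lt_of_le_of_ne (hv.1 dm) (Ne.symm hmem.2)
        set τ : ℝ := v dm / (-c dm) with hτ
        have hτ0 : 0 < τ := by
          apply div_pos hvdm
          linarith
        set v'' : ↥Vf → ℝ := fun d => v d + τ * c d with hv''
        have hv''nonneg : ∀ d, 0 ≤ v'' d := by
          intro d
          by_cases hcd : c d < 0
          · have hτle : τ ≤ v d / (-c d) := hmin d (by simp [hns, hcd])
            have : τ * (-c d) ≤ v d := by
              rw [← le_div_iff₀ (by linarith : (0:ℝ) < -c d)]
              exact hτle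
            simp only [hv'']
            nlinarith
          · push_neg at hcd
            simp only [hv'']
            nlinarith [hv.1 d, mul_nonneg hτ0.le hcd]
        have hv''feas : v'' ∈ Wfeas p Vf := by
          refine ⟨hv''nonneg, fun i => ?_⟩
          have : ∀ d : ↥Vf, v'' d * (d : Fin N → ℝ) i =
              v d * (d : Fin N → ℝ) i + τ * (c d * (d : Fin N → ℝ) i) := by
            intro d; simp only [hv'']; ring
          rw [Finset.sum_congr rfl (fun d _ => this d), Finset.sum_add_distrib,
            ← Finset.mul_sum, hrel i, hv.2 i]
          ring
        have hsupp : Finset.univ.filter (fun d => v'' d ≠ 0) ⊆ s := by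
          intro d hd
          simp only [Finset.mem_filter, Finset.mem_univ, true_and] at hd
          simp only [hs, Finset.mem_filter, Finset.mem_univ, true_and]
          intro hvd
          apply hd
          have hcd : c d = 0 := by
            by_contra hcd
            have := hcsupp d hcd
            simp only [hs, Finset.mem_filter] at this
            exact this.2 hvd
          simp only [hv'', hvd, hcd]
          ring
        have hdmzero : v'' dm = 0 := by
          show v dm + τ * c dm = 0
          have hne0 : -c dm ≠ 0 := by linarith
          have h5 : τ * -c dm = v dm := div_mul_cancel₀ _ hne0
          rw [mul_neg] at h5
          linarith
        have hdms : dm ∈ s := hcsupp dm hcdm.ne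
        have hcardlt : (Finset.univ.filter (fun d => v'' d ≠ 0)).card < s.card := by
          apply Finset.card_lt_card
          rw [Finset.ssubset_iff_of_subset hsupp]
          exact ⟨dm, hdms, by simp [hdmzero]⟩
        refine ⟨v'', hv''feas, hcardlt, ?_⟩
        have : ∀ d : ↥Vf, v'' d * μ (d : Fin N → ℝ) =
            v d * μ (d : Fin N → ℝ) + τ * (c d * μ (d : Fin N → ℝ)) := by
          intro d; simp only [hv'']; ring
        unfold Wobj
        rw [Finset.sum_congr rfl (fun d _ => this d), Finset.sum_add_distrib,
          ← Finset.mul_sum]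
        nlinarith
      -- produce the relation from cardinality
      have hfr : Module.finrank ℝ (Fin N → ℝ) <
          (s.image (fun d : ↥Vf => (d : Fin N → ℝ))).card := by
        rw [Finset.card_image_of_injective s Subtype.val_injective]
        have hfin : Module.finrank ℝ (Fin N → ℝ) = N := by
          simp [Module.finrank_pi]
        omega
      obtain ⟨g, hgrel, x₀, hx₀, hgx₀⟩ :=
        Module.exists_nontrivial_relation_of_finrank_lt_card hfr
      have hsum_aux : ∀ F : ↥Vf → ℝ,
          ∑ d : ↥Vf, (if d ∈ s then g ↑d else 0) * F d = ∑ d ∈ s, g ↑d * F d := by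
        intro F
        have h1 : ∀ d : ↥Vf, (if d ∈ s then g ↑d else 0) * F d =
            (if d ∈ s then g ↑d * F d else 0) := by
          intro d
          by_cases hd : d ∈ s <;> simp [hd]
        rw [Finset.sum_congr rfl (fun d _ => h1 d), Finset.sum_ite_mem,
          Finset.univ_inter]
      set c : ↥Vf → ℝ := fun d => if d ∈ s then g ↑d else 0 with hc
      have hcs : ∀ d, c d ≠ 0 → d ∈ s := by
        intro d hd
        by_contra hds
        simp [hc, hds] at hd
      have hrel : ∀ i, ∑ d : ↥Vf, c d * (d : Fin N → ℝ) i = 0 := by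
        intro i
        have h2 := Finset.sum_image (s := s) (f := fun x : Fin N → ℝ => g x * x i)
          (g := fun d : ↥Vf => (d : Fin N → ℝ)) (fun a _ b _ h => Subtype.val_injective h)
        have h3 := congrFun hgrel i
        rw [Finset.sum_apply] at h3
        simp only [Pi.smul_apply, smul_eq_mul, Pi.zero_apply] at h3
        rw [hsum_aux (fun d => (d : Fin N → ℝ) i), ← h2]
        exact h3
      have hc0 : ∑ d : ↥Vf, c d = 0 := by
        rw [Wfeas_comb_eq hpsum hV c]
        rw [Finset.sum_congr rfl (fun i (_ : i ∈ Finset.univ) => by rw [hrel i])]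
        simp
      have hcne : ∃ d, c d ≠ 0 := by
        obtain ⟨d₀, hd₀s, hd₀⟩ := Finset.mem_image.1 hx₀
        refine ⟨d₀, ?_⟩
        simp only [hc, if_pos hd₀s, hd₀]
        exact hgx₀
      have hstep : ∃ v'' ∈ Wfeas p Vf,
          (Finset.univ.filter (fun d => v'' d ≠ 0)).card < s.card ∧
          Wobj μ Vf v ≤ Wobj μ Vf v'' := by
        rcases le_total 0 (∑ d : ↥Vf, c d * μ (d : Fin N → ℝ)) with hobj | hobj
        · exact hkey c hrel hc0 hcne hcs hobj
        · refine hkey (fun d => -c d) (fun i => ?_) ?_ ?_ ?_ ?_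
          · rw [Finset.sum_congr rfl
              (fun d (_ : d ∈ Finset.univ) => (neg_mul (c d) _ : -c d * _ = _))]
            rw [Finset.sum_neg_distrib, hrel i]
            ring
          · rw [Finset.sum_neg_distrib, hc0]; ring
          · obtain ⟨d₀, hd₀⟩ := hcne
            exact ⟨d₀, by simpa using hd₀⟩
          · intro d hd
            apply hcs
            simpa using hd
          · rw [Finset.sum_congr rfl
              (fun d (_ : d ∈ Finset.univ) => (neg_mul (c d) _ : -c d * _ = _))]
            rw [Finset.sum_neg_distrib]
            linarith
      obtain ⟨v'', hv''feas, hv''card, hv''obj⟩ := hstep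
      obtain ⟨v', hv'feas, hv'card, hv'obj⟩ :=
        ih (Finset.univ.filter (fun d => v'' d ≠ 0)).card
          (lt_of_lt_of_le hv''card hcard) v'' hv''feas le_rfl
      exact ⟨v', hv'feas, hv'card, le_trans hv''obj hv'obj⟩

end LPLemmas
section MechLemmas

variable {N : ℕ} {p : Fin N → ℝ} {ε : ℝ}

lemma sum_dite_fin {n K : ℕ} (hK : K ≤ n) (G : Fin K → ℝ) :
    ∑ j : Fin n, (if h : (j : ℕ) < K then G ⟨j, h⟩ else 0) = ∑ m : Fin K, G m := by
  set F : ℕ → ℝ := fun j => if h : j < K then G ⟨j, h⟩ else 0 with hF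
  have h1 : ∑ j : Fin n, (if h : (j : ℕ) < K then G ⟨j, h⟩ else 0) = ∑ j ∈ Finset.range n, F j :=
    Fin.sum_univ_eq_sum_range F n
  have h2 : ∑ j ∈ Finset.range n, F j = ∑ j ∈ Finset.range K, F j := by
    refine (Finset.sum_subset (Finset.range_subset_range.2 hK) ?_).symm
    intro j _ hj
    rw [Finset.mem_range] at hj
    simp only [hF]
    rw [dif_neg hj]
  have h3 : ∑ j ∈ Finset.range K, F j = ∑ m : Fin K, F ↑m :=
    (Fin.sum_univ_eq_sum_range F K).symm
  rw [h1, h2, h3]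
  refine Finset.sum_congr rfl (fun m _ => ?_)
  simp only [hF]
  rw [dif_pos m.2]

lemma outDist_nonneg (hp : ∀ i, 0 < p i) {M : ℕ} {P : Matrix (Fin N) (Fin M) ℝ}
    (hP : ∀ i j, 0 ≤ P i j) (j : Fin M) : 0 ≤ outDist p P j :=
  Finset.sum_nonneg fun i _ => mul_nonneg (hp i).le (hP i j)

lemma col_eq_zero_of_outDist_eq_zero (hp : ∀ i, 0 < p i) {M : ℕ}
    {P : Matrix (Fin N) (Fin M) ℝ} (hP : ∀ i j, 0 ≤ P i j) {j : Fin M}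
    (hq : outDist p P j = 0) : ∀ i, P i j = 0 := by
  intro i
  have h := (Finset.sum_eq_zero_iff_of_nonneg
    (fun i (_ : i ∈ Finset.univ) => mul_nonneg (hp i).le (hP i j))).1 hq i (Finset.mem_univ i)
  have := hp i
  nlinarith

lemma pml_le_of_entries (hN : 1 ≤ N) (hε : 0 ≤ ε) {M : ℕ} {P : Matrix (Fin N) (Fin M) ℝ}
    (hP : ∀ i j, 0 ≤ P i j) {j : Fin M} (hq : 0 < outDist p P j)
    (hent : ∀ i, P i j ≤ Real.exp ε * outDist p P j) : pml p P j ≤ ε := by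
  have hne : Nonempty (Fin N) := ⟨⟨0, hN⟩⟩
  have hbdd : BddAbove (Set.range fun i => P i j) := Set.Finite.bddAbove (Set.finite_range _)
  have hsup_le : (⨆ i, P i j) ≤ Real.exp ε * outDist p P j := ciSup_le hent
  have hsup_ge : 0 ≤ ⨆ i, P i j :=
    le_trans (hP (Classical.arbitrary _) j) (le_ciSup hbdd _)
  unfold pml
  rcases eq_or_lt_of_le (div_nonneg hsup_ge hq.le) with h0 | hpos
  · rw [← h0, Real.log_zero]; exact hε
  · rw [Real.log_le_iff_le_exp hpos]
    rw [div_le_iff₀ hq]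
    linarith [hsup_le]

lemma entries_le_of_pml (hN : 1 ≤ N) (hp : ∀ i, 0 < p i) (hpsum : ∑ i, p i = 1)
    {P : Matrix (Fin N) (Fin N) ℝ} (hP : IsMechanism P) (hpml : SatisfiesPML p ε P)
    {j : Fin N} (hq : 0 < outDist p P j) :
    ∀ i, P i j ≤ Real.exp ε * outDist p P j := by
  have hne : Nonempty (Fin N) := ⟨⟨0, hN⟩⟩
  have hbdd : BddAbove (Set.range fun i => P i j) := Set.Finite.bddAbove (Set.finite_range _)
  have hle_sup : ∀ i, P i j ≤ ⨆ i', P i' j := fun i => le_ciSup hbdd i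
  have hout_le : outDist p P j ≤ ⨆ i', P i' j := by
    unfold outDist
    calc ∑ i, p i * P i j ≤ ∑ i, p i * (⨆ i', P i' j) :=
          Finset.sum_le_sum (fun i _ => mul_le_mul_of_nonneg_left (hle_sup i) (hp i).le)
      _ = ⨆ i', P i' j := by rw [← Finset.sum_mul, hpsum, one_mul]
  have hdivpos : 0 < (⨆ i', P i' j) / outDist p P j :=
    div_pos (lt_of_lt_of_le hq hout_le) hq
  have hlog := hpml j hq
  unfold pml at hlog
  have hdiv_le : (⨆ i', P i' j) / outDist p P j ≤ Real.exp ε :=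
    (Real.log_le_iff_le_exp hdivpos).1 hlog
  have hsup_le : (⨆ i', P i' j) ≤ Real.exp ε * outDist p P j := by
    rw [div_le_iff₀ hq] at hdiv_le
    linarith
  exact fun i => le_trans (hle_sup i) hsup_le

end MechLemmas
section ConstructLemma

variable {N : ℕ} {p : Fin N → ℝ} {ε : ℝ}

/-- From a feasible weight vector supported on at most `N` points of `V`, one
can build an `N × N` mechanism achieving the LP objective exactly. -/
lemma mechanism_of_weights (hN : 1 ≤ N) (hp : ∀ i, 0 < p i) (hpsum : ∑ i, p i = 1)
    (hε : 0 ≤ ε) {μ : (Fin N → ℝ) → ℝ} (hμ : Sublinear μ)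
    {Vf : Finset (Fin N → ℝ)} (hVf : ∀ x ∈ Vf, x ∈ liftPolytope N p ε)
    {v : ↥Vf → ℝ} (hv : v ∈ Wfeas p Vf)
    (hcard : (Finset.univ.filter (fun d => v d ≠ 0)).card ≤ N) :
    ∃ P : Matrix (Fin N) (Fin N) ℝ, IsMechanism P ∧ SatisfiesPML p ε P ∧
      utility μ P = Wobj μ Vf v := by
  classical
  set s : Finset ↥Vf := Finset.univ.filter (fun d => v d ≠ 0) with hs
  set K : ℕ := s.card with hK
  have hKN : K ≤ N := hcard
  set e : Fin K ≃ ↥s := s.equivFin.symm with he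
  set wt : Fin K → ℝ := fun m => v ↑(e m) with hwt
  set vec : Fin K → (Fin N → ℝ) := fun m => ((e m : ↥Vf) : Fin N → ℝ) with hvec
  set c : Fin N → ℝ := fun j => if h : (j : ℕ) < K then wt ⟨j, h⟩ else 0 with hc
  set g : Fin N → (Fin N → ℝ) := fun j =>
    if h : (j : ℕ) < K then vec ⟨j, h⟩ else fun _ => 1 with hg
  set P : Matrix (Fin N) (Fin N) ℝ := Matrix.of fun i j => c j * g j i with hP
  -- basic facts
  have hones : (fun _ : Fin N => (1:ℝ)) ∈ liftPolytope N p ε := by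
    constructor
    · intro i
      exact ⟨zero_le_one, Real.one_le_exp hε⟩
    · simpa using hpsum
  have hgV : ∀ j, g j ∈ liftPolytope N p ε := by
    intro j
    simp only [hg]
    by_cases h : (j : ℕ) < K
    · rw [dif_pos h]
      exact hVf _ (((e ⟨j, h⟩ : ↥s) : ↥Vf)).2
    · rw [dif_neg h]
      exact hones
  have hc0 : ∀ j, 0 ≤ c j := by
    intro j
    simp only [hc]
    by_cases h : (j : ℕ) < K
    · rw [dif_pos h]
      exact hv.1 _
    · rw [dif_neg h]
  -- the key sum identity
  have hkey : ∀ F : (Fin N → ℝ) → ℝ,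
      ∑ j, c j * F (g j) = ∑ d : ↥Vf, v d * F (d : Fin N → ℝ) := by
    intro F
    have h1 : ∀ j : Fin N, c j * F (g j) =
        (if h : (j : ℕ) < K then wt ⟨j, h⟩ * F (vec ⟨j, h⟩) else 0) := by
      intro j
      by_cases h : (j : ℕ) < K
      · rw [dif_pos h]
        simp only [hc, hg]
        rw [dif_pos h, dif_pos h]
      · rw [dif_neg h]
        simp only [hc]
        rw [dif_neg h, zero_mul]
    rw [Finset.sum_congr rfl (fun j _ => h1 j),
      sum_dite_fin hKN (fun m => wt m * F (vec m))]
    have h2 : ∑ m : Fin K, wt m * F (vec m) =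
        ∑ x : ↥s, v ↑x * F ((x : ↥Vf) : Fin N → ℝ) :=
      Fintype.sum_equiv e _ _ (fun m => rfl)
    rw [h2]
    have h3 : ∑ x : ↥s, v ↑x * F ((x : ↥Vf) : Fin N → ℝ) =
        ∑ d ∈ s, v d * F (d : Fin N → ℝ) := Finset.sum_coe_sort s (fun d => v d * F (d : Fin N → ℝ))
    rw [h3]
    refine Finset.sum_subset (Finset.subset_univ s) ?_
    intro d _ hd
    simp only [hs, Finset.mem_filter, Finset.mem_univ, true_and, not_not] at hd
    rw [hd, zero_mul]
  -- mechanism properties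
  have hmech : IsMechanism P := by
    constructor
    · intro i j
      exact mul_nonneg (hc0 j) ((hgV j).1 i).1
    · intro i
      have := hkey (fun x => x i)
      simpa only [hP, Matrix.of_apply] using this.trans (hv.2 i)
  have hout : ∀ j, outDist p P j = c j := by
    intro j
    unfold outDist
    have h1 : ∀ i, p i * P i j = c j * (p i * g j i) := by
      intro i; simp only [hP, Matrix.of_apply]; ring
    rw [Finset.sum_congr rfl (fun i _ => h1 i), ← Finset.mul_sum, (hgV j).2, mul_one]
  have hpml : SatisfiesPML p ε P := by
    intro j hq
    rw [hout j] at hq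
    apply pml_le_of_entries hN hε hmech.1
    · rw [hout j]; exact hq
    · intro i
      rw [hout j]
      simp only [hP, Matrix.of_apply]
      calc c j * g j i ≤ c j * Real.exp ε :=
            mul_le_mul_of_nonneg_left ((hgV j).1 i).2 (hc0 j)
        _ = Real.exp ε * c j := by ring
  refine ⟨P, hmech, hpml, ?_⟩
  unfold utility
  have hcol : ∀ j, μ (fun i => P i j) = c j * μ (g j) := by
    intro j
    have hfun : (fun i => P i j) = c j • g j := by
      funext i
      simp only [hP, Matrix.of_apply, Pi.smul_apply, smul_eq_mul]
    rw [hfun, hμ.2.1 (c j) (hc0 j) (g j) (fun i => ((hgV j).1 i).1)]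
  rw [Finset.sum_congr rfl (fun j _ => hcol j)]
  exact hkey μ

end ConstructLemma
section UpperLemma

variable {N : ℕ} {p : Fin N → ℝ} {ε : ℝ}

lemma sum_over_coe {α : Type*} [DecidableEq α] (Vf : Finset α) {T : Finset α} (hT : T ⊆ Vf)
    (a F : α → ℝ) (haz : ∀ x ∉ T, a x = 0) :
    ∑ d : ↥Vf, a ↑d * F ↑d = ∑ x ∈ T, a x * F x := by
  rw [Finset.sum_coe_sort Vf (fun x => a x * F x)]
  exact (Finset.sum_subset hT (fun x _ hx => by rw [haz x hx, zero_mul])).symm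

/-- Any mechanism's utility is dominated by the LP objective of some feasible
weight vector over the extreme points. -/
lemma utility_le_feasible (hN : 1 ≤ N) (hp : ∀ i, 0 < p i) (hpsum : ∑ i, p i = 1)
    {μ : (Fin N → ℝ) → ℝ} (hμ : Sublinear μ)
    {Vf : Finset (Fin N → ℝ)} (hVfc : ↑Vf = (liftPolytope N p ε).extremePoints ℝ)
    {P : Matrix (Fin N) (Fin N) ℝ} (hP : IsMechanism P) (hpml : SatisfiesPML p ε P) :
    ∃ v ∈ Wfeas p Vf, utility μ P ≤ Wobj μ Vf v := by
  classical
  have hextV : ∀ x, x ∈ (liftPolytope N p ε).extremePoints ℝ → x ∈ liftPolytope N p ε :=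
    fun x hx => extremePoints_subset hx
  set q : Fin N → ℝ := fun j => outDist p P j with hq
  have hq0 : ∀ j, 0 ≤ q j := fun j => outDist_nonneg hp hP.1 j
  have hdec : ∀ j, ∃ (T : Finset (Fin N → ℝ)) (a : (Fin N → ℝ) → ℝ),
      (↑T ⊆ (liftPolytope N p ε).extremePoints ℝ) ∧ (∀ x, 0 ≤ a x) ∧
      (∀ x ∉ T, a x = 0) ∧ (∀ i, q j * (∑ x ∈ T, a x * x i) = P i j) ∧
      μ (fun i => P i j) ≤ q j * ∑ x ∈ T, a x * μ x := by
    intro j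
    rcases eq_or_lt_of_le (hq0 j) with h0 | hpos
    · -- zero column
      have hcol0 : ∀ i, P i j = 0 := col_eq_zero_of_outDist_eq_zero hp hP.1 h0.symm
      refine ⟨∅, fun _ => 0, by simp, fun x => le_rfl, fun x _ => rfl, ?_, ?_⟩
      · intro i
        rw [hcol0 i]
        simp
      · have : (fun i => P i j) = 0 := funext fun i => hcol0 i
        rw [this, mu_zero hμ]
        simp
    · -- positive column: normalize
      set lam : Fin N → ℝ := fun i => P i j / q j with hlam
      have hlamV : lam ∈ liftPolytope N p ε := by
        constructor
        · intro i
          constructor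
          · exact div_nonneg (hP.1 i j) (hq0 j)
          · rw [div_le_iff₀ hpos]
            have := entries_le_of_pml hN hp hpsum hP hpml hpos i
            linarith
        · have h1 : ∀ i, p i * lam i = p i * P i j / q j := by
            intro i; simp only [hlam]; ring
          rw [Finset.sum_congr rfl (fun i _ => h1 i), ← Finset.sum_div]
          have : ∑ i, p i * P i j = q j := rfl
          rw [this, div_self hpos.ne']
      obtain ⟨T, a, hT, ha0, haz, has, hac⟩ :=
        decomp_lemma hp (freeSet ε lam).card lam hlamV le_rfl
      refine ⟨T, a, hT, ha0, haz, ?_, ?_⟩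
      · intro i
        rw [hac i]
        simp only [hlam]
        field_simp
      · have hcol : (fun i => P i j) = q j • lam := by
          funext i
          simp only [hlam, Pi.smul_apply, smul_eq_mul]
          field_simp
        rw [hcol, hμ.2.1 (q j) (hq0 j) lam (fun i => div_nonneg (hP.1 i j) (hq0 j))]
        apply mul_le_mul_of_nonneg_left _ (hq0 j)
        have hlameq : lam = fun i => ∑ x ∈ T, a x * x i := funext fun i => (hac i).symm
        rw [hlameq]
        exact mu_combo_le hμ T a id (fun x hx => ha0 x)
          (fun x hx i => ((hextV x (hT hx)).1 i).1)
  choose T a hT ha0 haz hcolsum hval using hdec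
  have hTVf : ∀ j, T j ⊆ Vf := by
    intro j x hx
    rw [← Finset.mem_coe, hVfc]
    exact hT j hx
  refine ⟨fun d => ∑ j, q j * a j ↑d, ⟨fun d => Finset.sum_nonneg fun j _ =>
    mul_nonneg (hq0 j) (ha0 j ↑d), ?_⟩, ?_⟩
  · intro i
    have h1 : ∀ d : ↥Vf, (∑ j, q j * a j ↑d) * (d : Fin N → ℝ) i =
        ∑ j, q j * (a j ↑d * (d : Fin N → ℝ) i) := by
      intro d
      rw [Finset.sum_mul]
      exact Finset.sum_congr rfl fun j _ => by ring
    rw [Finset.sum_congr rfl (fun d _ => h1 d), Finset.sum_comm]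
    have h2 : ∀ j, ∑ d : ↥Vf, q j * (a j ↑d * (d : Fin N → ℝ) i) = P i j := by
      intro j
      rw [← Finset.mul_sum]
      rw [sum_over_coe Vf (hTVf j) (a j) (fun x => x i) (haz j)]
      exact hcolsum j i
    rw [Finset.sum_congr rfl (fun j _ => h2 j)]
    exact hP.2 i
  · unfold utility Wobj
    have h1 : ∀ d : ↥Vf, (∑ j, q j * a j ↑d) * μ ↑d =
        ∑ j, q j * (a j ↑d * μ ↑d) := by
      intro d
      rw [Finset.sum_mul]
      exact Finset.sum_congr rfl fun j _ => by ring
    rw [Finset.sum_congr rfl (fun d _ => h1 d), Finset.sum_comm]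
    apply Finset.sum_le_sum
    intro j _
    refine le_trans (hval j) ?_
    rw [← Finset.mul_sum, sum_over_coe Vf (hTVf j) (a j) μ (haz j)]

end UpperLemma
/-- **Linear program over extremal lift vectors.** The supremum
of a permutation-symmetric sub-convex utility over `M_N(ε)` equals the
maximum, over weight assignments `w` supported on the extreme points of the
lift polytope with `∑ w(λ) = 1` and `∑ w(λ)·λ_i = 1` for every `i`, of the
linear objective `∑ w(λ)·μ(λ)`. -/
theorem linear_program_lifts (N : ℕ) (hN : 1 ≤ N) (p : Fin N → ℝ)
    (hp : ∀ i, 0 < p i) (hpsum : ∑ i, p i = 1)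
    (ε : ℝ) (hε : 0 ≤ ε)
    (μ : (Fin N → ℝ) → ℝ) (hμ : Sublinear μ) (hsym : PermSymmetric μ) :
    IsGreatest
      {u : ℝ | ∃ w : (Fin N → ℝ) → ℝ,
        (∀ lam, 0 ≤ w lam) ∧
        (∀ lam, lam ∉ (liftPolytope N p ε).extremePoints ℝ → w lam = 0) ∧
        (∑ᶠ lam, w lam) = 1 ∧
        (∀ i, (∑ᶠ lam, w lam * lam i) = 1) ∧
        u = ∑ᶠ lam, w lam * μ lam}
      (sSup {u : ℝ | ∃ P : Matrix (Fin N) (Fin N) ℝ,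
        IsMechanism P ∧ SatisfiesPML p ε P ∧ u = utility μ P}) := by
  classical
  have hfin : ((liftPolytope N p ε).extremePoints ℝ).Finite := finite_extremePoints hp
  set Vf : Finset (Fin N → ℝ) := hfin.toFinset with hVfdef
  have hVfc : ↑Vf = (liftPolytope N p ε).extremePoints ℝ := hfin.coe_toFinset
  have hVfV : ∀ x ∈ Vf, x ∈ liftPolytope N p ε := by
    intro x hx
    apply extremePoints_subset (A := liftPolytope N p ε) (𝕜 := ℝ)
    rw [← hVfc]
    exact_mod_cast hx
  have hVfsum : ∀ x ∈ Vf, ∑ i, p i * x i = 1 := fun x hx => (hVfV x hx).2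
  -- the all-ones vector is feasible, so Wfeas is nonempty
  have hones : (fun _ : Fin N => (1:ℝ)) ∈ liftPolytope N p ε := by
    constructor
    · intro i; exact ⟨zero_le_one, Real.one_le_exp hε⟩
    · simpa using hpsum
  have hWne : (Wfeas p Vf).Nonempty := by
    obtain ⟨T, a, hT, ha0, haz, has, hac⟩ :=
      decomp_lemma hp (freeSet ε (fun _ => 1)).card (fun _ => 1) hones le_rfl
    have hTVf : T ⊆ Vf := by
      intro x hx
      rw [← Finset.mem_coe, hVfc]
      exact hT hx
    refine ⟨fun d => a ↑d, fun d => ha0 ↑d, fun i => ?_⟩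
    rw [sum_over_coe Vf hTVf a (fun x => x i) haz]
    exact hac i
  -- maximizer and its support-reduced version
  obtain ⟨vmax, hvmax, hvmax_opt⟩ := Wfeas_exists_max hpsum hVfsum μ hWne
  obtain ⟨v', hv', hv'card, hv'obj⟩ := Wfeas_support_reduce hpsum hVfsum μ
    (Finset.univ.filter (fun d => vmax d ≠ 0)).card vmax hvmax le_rfl
  have hobj_eq : Wobj μ Vf v' = Wobj μ Vf vmax :=
    le_antisymm (hvmax_opt v' hv') hv'obj
  obtain ⟨Pstar, hPmech, hPpml, hPutil⟩ :=
    mechanism_of_weights hN hp hpsum hε hμ hVfV hv' hv'card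
  -- the mechanism value set has greatest element Wobj μ Vf vmax
  have hSg : IsGreatest {u : ℝ | ∃ P : Matrix (Fin N) (Fin N) ℝ,
      IsMechanism P ∧ SatisfiesPML p ε P ∧ u = utility μ P} (Wobj μ Vf vmax) := by
    constructor
    · exact ⟨Pstar, hPmech, hPpml, by rw [hPutil, hobj_eq]⟩
    · rintro u ⟨P, hPm, hPp, rfl⟩
      obtain ⟨v, hvfeas, hvle⟩ := utility_le_feasible hN hp hpsum hμ hVfc hPm hPp
      exact le_trans hvle (hvmax_opt v hvfeas)
  rw [hSg.csSup_eq]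
  -- now show `Wobj μ Vf vmax` is the greatest element of the LP value set
  constructor
  · -- membership: extend vmax to a weight function on all lift vectors
    set w : (Fin N → ℝ) → ℝ := fun lam => if h : lam ∈ Vf then vmax ⟨lam, h⟩ else 0
      with hwdef
    have hw_eq : ∀ d : ↥Vf, w ↑d = vmax d := by
      intro d
      simp only [hwdef]
      rw [dif_pos d.2]
    have hwsupp : Function.support w ⊆ ↑Vf := by
      intro lam hlam
      by_contra hmem
      apply hlam
      simp only [hwdef]
      rw [dif_neg (fun h => hmem (Finset.mem_coe.2 h))]
    refine ⟨w, ?_, ?_, ?_, ?_, ?_⟩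
    · intro lam
      simp only [hwdef]
      by_cases h : lam ∈ Vf
      · rw [dif_pos h]; exact hvmax.1 _
      · rw [dif_neg h]
    · intro lam hlam
      simp only [hwdef]
      rw [dif_neg]
      intro h
      apply hlam
      rw [← hVfc]
      exact_mod_cast h
    · rw [finsum_eq_sum_of_support_subset w hwsupp,
        ← Finset.sum_coe_sort Vf w,
        Finset.sum_congr rfl (fun d (_ : d ∈ Finset.univ) => hw_eq d)]
      exact Wfeas_sum_one hpsum hVfsum hvmax
    · intro i
      have hsupp2 : Function.support (fun lam => w lam * lam i) ⊆ ↑Vf := by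
        intro lam hlam
        apply hwsupp
        intro hw0
        apply hlam
        simp only [hw0, zero_mul]
      rw [finsum_eq_sum_of_support_subset _ hsupp2,
        ← Finset.sum_coe_sort Vf (fun lam => w lam * lam i),
        Finset.sum_congr rfl (fun d (_ : d ∈ Finset.univ) => by rw [hw_eq d])]
      exact hvmax.2 i
    · have hsupp3 : Function.support (fun lam => w lam * μ lam) ⊆ ↑Vf := by
        intro lam hlam
        apply hwsupp
        intro hw0
        apply hlam
        simp only [hw0, zero_mul]
      rw [finsum_eq_sum_of_support_subset _ hsupp3,
        ← Finset.sum_coe_sort Vf (fun lam => w lam * μ lam),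
        Finset.sum_congr rfl (fun d (_ : d ∈ Finset.univ) => by rw [hw_eq d])]
      rfl
  · -- upper bound
    rintro u ⟨w, hw0, hwz, hws, hwc, rfl⟩
    have hwsupp : Function.support w ⊆ ↑Vf := by
      intro lam hlam
      rw [hVfc]
      by_contra hmem
      exact hlam (hwz lam hmem)
    have hfeas : (fun d : ↥Vf => w ↑d) ∈ Wfeas p Vf := by
      refine ⟨fun d => hw0 ↑d, fun i => ?_⟩
      have hsupp2 : Function.support (fun lam => w lam * lam i) ⊆ ↑Vf := by
        intro lam hlam
        apply hwsupp
        intro hw'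
        apply hlam
        simp only [hw', zero_mul]
      rw [← hwc i, finsum_eq_sum_of_support_subset _ hsupp2,
        ← Finset.sum_coe_sort Vf (fun lam => w lam * lam i)]
    have hval : ∑ᶠ lam, w lam * μ lam = Wobj μ Vf (fun d : ↥Vf => w ↑d) := by
      have hsupp3 : Function.support (fun lam => w lam * μ lam) ⊆ ↑Vf := by
        intro lam hlam
        apply hwsupp
        intro hw'
        apply hlam
        simp only [hw', zero_mul]
      rw [finsum_eq_sum_of_support_subset _ hsupp3,
        ← Finset.sum_coe_sort Vf (fun lam => w lam * μ lam)]
      rfl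
    rw [hval]
    exact hvmax_opt _ hfeas
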